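/- For $\epsilon = 1$, the matrix $Q_1$ with entries $(Q_1)_{11} = -2ag\Delta + 2a^\dagger g\Delta + 4g^2\Delta + \Delta$, $(Q_1)_{12} = 4a^2g^2 - 8ag^3 + 4g^4 + \Delta^2$, $(Q_1)_{21} = 4(a^\dagger)^2g^2 + 8a^\dagger g^3 + 4g^4 + \Delta^2$, $(Q_1)_{22} = -2ag\Delta + 2a^\dagger g\Delta + 4g^2\Delta - \Delta$, satisfies $\tilde{H}^1 Q_1 = Q_1 H^1$, so $J_1 = (\mathcal{P}\otimes I)Q_1$ commutes with the Hamiltonian $H^1 = a^\dagger a + \Delta\sigma_x + g(a+a^\dagger)\sigma_z + \sigma_z$. -/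
import Mathlib


open Polynomial

noncomputable section

/-- The space of operators on `ℂ[x]`. -/
abbrev E := Module.End ℂ (Polynomial ℂ)

/-- Annihilation operator `a = d/dx`. -/
def opA : E := Polynomial.derivative

/-- Creation operator `a† = ` multiplication by `x`. -/
def opC : E := LinearMap.mulLeft ℂ (X : Polynomial ℂ)

/-- Parity operator `(𝒫 f)(x) = f(-x)`. -/
def opP : E := (aeval (-X : Polynomial ℂ)).toLinearMap

/-- `2×2` matrices of operators, i.e. operators on `ℂ[x] ⊗ ℂ²`. -/
abbrev M2 := Matrix (Fin 2) (Fin 2) E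

/-- The asymmetric quantum Rabi Hamiltonian
`H^ε = a†a + Δ σx + g (a+a†) σz + ε σz`. -/
def Hop (g Δ ε : ℝ) : M2 :=
  !![opC * opA + (g : ℂ) • (opA + opC) + (ε : ℂ) • 1, (Δ : ℂ) • 1;
     (Δ : ℂ) • 1, opC * opA - (g : ℂ) • (opA + opC) - (ε : ℂ) • 1]

/-- The parity operator `𝒫 ⊗ I` on `ℂ[x] ⊗ ℂ²`. -/
def Pm : M2 := !![opP, 0; 0, opP]

end

/-- The matrix `Q₁` for `ε = 1`. -/
noncomputable def Q1 (g Δ : ℝ) : M2 :=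
  !![-(2 * g * Δ : ℂ) • opA + (2 * g * Δ : ℂ) • opC + (4 * g^2 * Δ + Δ : ℂ) • 1,
       (4 * g^2 : ℂ) • (opA * opA) - (8 * g^3 : ℂ) • opA + (4 * g^4 + Δ^2 : ℂ) • 1;
     (4 * g^2 : ℂ) • (opC * opC) + (8 * g^3 : ℂ) • opC + (4 * g^4 + Δ^2 : ℂ) • 1,
       -(2 * g * Δ : ℂ) • opA + (2 * g * Δ : ℂ) • opC + (4 * g^2 * Δ - Δ : ℂ) • 1]


section Aux

private lemma mat2_congr {α : Type*} {a b c d a' b' c' d' : α}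
    (h1 : a = a') (h2 : b = b') (h3 : c = c') (h4 : d = d') :
    !![a, b; c, d] = !![a', b'; c', d'] := by
  subst h1 h2 h3 h4; rfl

end Aux

set_option maxHeartbeats 1000000 in
private lemma part1 (g Δ : ℝ) : Hop (-g) Δ 1 * Q1 g Δ = Q1 g Δ * Hop g Δ 1 := by
  rw [Hop, Hop, Q1, Matrix.mul_fin_two, Matrix.mul_fin_two]
  refine mat2_congr ?_ ?_ ?_ ?_ <;>
  · apply LinearMap.ext; intro p
    simp only [LinearMap.add_apply, LinearMap.sub_apply, LinearMap.smul_apply,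
      LinearMap.neg_apply, Module.End.mul_apply, Module.End.one_apply, opA, opC,
      LinearMap.mulLeft_apply, map_add, map_sub, map_smul, map_neg, derivative_mul,
      derivative_X, derivative_one, derivative_C, smul_add, smul_sub, smul_neg, smul_smul]
    simp only [smul_eq_C_mul, Complex.ofReal_neg, Complex.ofReal_one, map_add, map_sub,
      map_mul, map_one, map_pow, map_ofNat, map_neg]
    ring

set_option maxHeartbeats 1000000 in
private lemma partP (g Δ : ℝ) : Hop g Δ 1 * Pm = Pm * Hop (-g) Δ 1 := by
  rw [Hop, Hop, Pm, Matrix.mul_fin_two, Matrix.mul_fin_two]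
  refine mat2_congr ?_ ?_ ?_ ?_ <;>
  · apply LinearMap.ext; intro p
    simp only [LinearMap.add_apply, LinearMap.sub_apply, LinearMap.smul_apply,
      LinearMap.neg_apply, Module.End.mul_apply, Module.End.one_apply, LinearMap.zero_apply,
      opA, opC, opP, AlgHom.toLinearMap_apply, ← comp_eq_aeval, derivative_comp,
      LinearMap.mulLeft_apply, map_add, map_sub, map_smul, map_neg, derivative_mul,
      derivative_X, derivative_one, derivative_C, derivative_neg, smul_add, smul_sub,
      smul_neg, smul_smul, add_comp, sub_comp, mul_comp, neg_comp, X_comp, C_comp,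
      one_comp, derivative_zero, mul_zero, zero_mul, add_zero, zero_add, map_zero]
    try simp only [smul_eq_C_mul, Complex.ofReal_neg, Complex.ofReal_one, map_add, map_sub,
      map_mul, map_one, map_pow, map_ofNat, map_neg, add_comp, sub_comp, mul_comp,
      neg_comp, X_comp, C_comp, one_comp]
    try ring

/-- `Q₁` intertwines `H̃¹` and `H¹`, so `J₁ = (𝒫 ⊗ I) Q₁`
commutes with `H¹`. -/
theorem Q1_intertwines (g Δ : ℝ) :
    Hop (-g) Δ 1 * Q1 g Δ = Q1 g Δ * Hop g Δ 1 ∧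
      Hop g Δ 1 * (Pm * Q1 g Δ) = (Pm * Q1 g Δ) * Hop g Δ 1 := by
  refine ⟨part1 g Δ, ?_⟩
  rw [← mul_assoc, partP g Δ, mul_assoc, part1 g Δ, ← mul_assoc]
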